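/- (Expected update measure) Let k ≥ 3 be odd. For (i,j) ∈ {0,…,2^{k−1}−1} × {0,…,k−1}, the number of parity elements that must be updated when a_{i,j} changes is u(i,j) = 1 + |{m ∈ {0,…,2^{k−1}−1} : (i,j) ∈ B_m}| (one horizontal element plus the butterfly elements whose support set contains (i,j)). Then Σ_{i=0}^{2^{k−1}−1} Σ_{j=0}^{k−1} u(i,j) = k · 2^{k−2} · (⌊k/2⌋ + 4); equivalently, the average of u(i,j) over all (i,j) equals ⌊k/2⌋/2 + 2. -/

import Mathlib

/-- The `j`-th bit of `i` (`j ≥ 0`). -/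
def bitp (i j : ℕ) : Bool := i.testBit j

/-- The `(j-1)`-th bit of `i`, with the convention that the bit at position `-1` is `0`. -/
def bitm (i j : ℕ) : Bool := if j = 0 then false else i.testBit (j - 1)

/-- `i` is dark in column `j` iff `i(j) = i(j-1)`. -/
def dark (i j : ℕ) : Prop := bitp i j = bitm i j

instance (i j : ℕ) : Decidable (dark i j) := by unfold dark; infer_instance

/-- `ℓ_{i,j} = i ⊕ (2^j - 1)`. -/
def ell (i j : ℕ) : ℕ := i ^^^ (2 ^ j - 1)

/-- The set `B_{i,j}`. -/
def Bset (k i j : ℕ) : Finset (ℕ × ℕ) :=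
  if dark i j then
    ((Finset.range k).filter
        (fun j' : ℕ => ((j : ℤ) - (j' : ℤ)) % (k : ℤ) ≤ ((k / 2 : ℕ) : ℤ))).image
      (fun j' => (i, j'))
  else {(i, j)}

/-- The butterfly support set `B_i = ⋃_{j ∈ [k]} B_{ℓ_{i,j}, j}`. -/
def Bline (k i : ℕ) : Finset (ℕ × ℕ) :=
  (Finset.range k).biUnion (fun j => Bset k (ell i j) j)

/-- Horizontal parity `h_i(a)`. -/
def hpar (k : ℕ) (a : ℕ → ℕ → ZMod 2) (i : ℕ) : ZMod 2 :=
  ∑ j ∈ Finset.range k, a i j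

/-- Butterfly parity `b_i(a)`. -/
def bpar (k : ℕ) (a : ℕ → ℕ → ZMod 2) (i : ℕ) : ZMod 2 :=
  ∑ p ∈ Bline k i, a p.1 p.2

/-- The number of parity elements updated when `a_{i,j}` changes: one horizontal element
plus the butterfly elements whose support set contains `(i,j)`. -/
def ucount (k i j : ℕ) : ℕ :=
  1 + ((Finset.range (2 ^ (k - 1))).filter (fun m => (i, j) ∈ Bline k m)).card


lemma keyb (k j b : ℕ) (hk : 0 < k) (hbk : b < k) :
    ((j:ℤ) - (((j + k - b) % k : ℕ) : ℤ)) % k = b := by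
  have hcast : (((j + k - b) % k : ℕ) : ℤ) = ((j:ℤ) + k - b) % k := by
    push_cast [Nat.cast_sub (by omega : b ≤ j + k)]
    ring_nf
  rw [hcast]
  have h1 : ((j:ℤ) - ((j:ℤ) + k - b) % k) % k = ((j:ℤ) - ((j:ℤ) + k - b)) % k := by
    rw [Int.sub_emod, Int.emod_emod_of_dvd _ dvd_rfl, ← Int.sub_emod]
  rw [h1, show (j:ℤ) - ((j:ℤ) + k - b) = b + k * (-1) by ring, Int.add_mul_emod_self_left,
    Int.emod_eq_of_lt (by omega) (by exact_mod_cast hbk)]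

lemma lemA (k j : ℕ) (hk : 0 < k) :
    ((Finset.range k).filter
        (fun j' : ℕ => ((j : ℤ) - (j' : ℤ)) % (k : ℤ) ≤ ((k / 2 : ℕ) : ℤ))).card
      = k / 2 + 1 := by
  have hk' : (0:ℤ) < (k:ℤ) := by exact_mod_cast hk
  have hhalf : k / 2 < k := Nat.div_lt_self hk one_lt_two
  rw [show k / 2 + 1 = (Finset.range (k / 2 + 1)).card from (Finset.card_range _).symm]
  refine Finset.card_bij' (fun a _ => (((j : ℤ) - (a : ℤ)) % (k : ℤ)).toNat)
    (fun b _ => (j + k - b) % k) ?_ ?_ ?_ ?_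
  · intro a ha
    simp only [Finset.mem_filter, Finset.mem_range] at ha ⊢
    have h1 : (0:ℤ) ≤ ((j : ℤ) - (a : ℤ)) % (k : ℤ) := Int.emod_nonneg _ (by omega)
    omega
  · intro b hb
    simp only [Finset.mem_range] at hb
    have hbk : b < k := by omega
    simp only [Finset.mem_filter, Finset.mem_range]
    refine ⟨Nat.mod_lt _ hk, ?_⟩
    rw [keyb k j b hk hbk]
    exact_mod_cast by omega
  · intro a ha
    simp only [Finset.mem_filter, Finset.mem_range] at ha
    set r : ℕ := (((j : ℤ) - (a : ℤ)) % (k : ℤ)).toNat with hr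
    have h0 : (0:ℤ) ≤ ((j : ℤ) - (a : ℤ)) % (k : ℤ) := Int.emod_nonneg _ (by omega)
    have h2 : ((j : ℤ) - (a : ℤ)) % (k : ℤ) < k := Int.emod_lt_of_pos _ hk'
    have hrk : r < k := by omega
    have hrc : (r : ℤ) = ((j : ℤ) - (a : ℤ)) % (k : ℤ) := by omega
    have hgoal : (((j + k - r) % k : ℕ) : ℤ) = (a : ℤ) := by
      have hcast : (((j + k - r) % k : ℕ) : ℤ) = ((j:ℤ) + k - r) % k := by
        push_cast [Nat.cast_sub (by omega : r ≤ j + k)]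
        ring_nf
      rw [hcast, hrc]
      have h1 : ((j:ℤ) + k - ((j:ℤ) - a) % k) % k = ((j:ℤ) + k - ((j:ℤ) - a)) % k := by
        rw [Int.sub_emod, Int.emod_emod_of_dvd _ dvd_rfl, ← Int.sub_emod]
      rw [h1, show (j:ℤ) + k - ((j:ℤ) - a) = a + k * 1 by ring, Int.add_mul_emod_self_left,
        Int.emod_eq_of_lt (by omega) (by exact_mod_cast ha.1)]
    exact_mod_cast hgoal
  · intro b hb
    simp only [Finset.mem_range] at hb
    have := keyb k j b hk (by omega)
    omega

lemma ell_inj (m : ℕ) : Function.Injective (ell m) := by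
  intro a b h
  unfold ell at h
  have h2 : 2 ^ a - 1 = 2 ^ b - 1 := by
    have := congrArg (fun x => m ^^^ x) h
    simpa [← Nat.xor_assoc] using this
  have ha := Nat.one_le_two_pow (n := a)
  have hb := Nat.one_le_two_pow (n := b)
  have : (2:ℕ) ^ a = 2 ^ b := by omega
  exact Nat.pow_right_injective le_rfl this

lemma Bset_fst (k i j : ℕ) (p : ℕ × ℕ) (hp : p ∈ Bset k i j) : p.1 = i := by
  unfold Bset at hp
  split at hp
  · simp only [Finset.mem_image] at hp
    obtain ⟨a, _, rfl⟩ := hp; rfl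
  · simp only [Finset.mem_singleton] at hp; subst hp; rfl

lemma Bset_snd (k i j : ℕ) (p : ℕ × ℕ) (hp : p ∈ Bset k i j) (hj : j < k) : p.2 < k := by
  unfold Bset at hp
  split at hp
  · simp only [Finset.mem_image, Finset.mem_filter, Finset.mem_range] at hp
    obtain ⟨a, ⟨hak, -⟩, rfl⟩ := hp; exact hak
  · simp only [Finset.mem_singleton] at hp; subst hp; exact hj

lemma Bset_card (k i j : ℕ) (hk : 0 < k) :
    (Bset k i j).card = if dark i j then k / 2 + 1 else 1 := by
  unfold Bset
  split <;> rename_i h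
  · rw [Finset.card_image_of_injective _ (fun a b h => by simpa using h), lemA k j hk]
  · simp

lemma Bline_card (k m : ℕ) (hk : 0 < k) :
    (Bline k m).card = ∑ j ∈ Finset.range k, (Bset k (ell m j) j).card := by
  unfold Bline
  apply Finset.card_biUnion
  intro a _ b _ hab
  simp only [Finset.disjoint_left]
  intro p hpa hpb
  have h1 := Bset_fst k (ell m a) a p hpa
  have h2 := Bset_fst k (ell m b) b p hpb
  exact hab (ell_inj m (h1 ▸ h2))

lemma dark_ell_iff (m j : ℕ) :
    dark (ell m j) j ↔
      (if j = 0 then m.testBit 0 = false else m.testBit j = !m.testBit (j - 1)) := by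
  unfold dark ell bitp bitm
  split <;> rename_i h
  · subst h
    simp [Nat.testBit_xor]
  · have hj : j - 1 < j := by omega
    simp [Nat.testBit_xor, Nat.testBit_two_pow_sub_one, Nat.lt_irrefl, hj]

lemma xor_pow_lt {n a e : ℕ} (ha : a < 2 ^ n) (he : e < n) : a ^^^ 2 ^ e < 2 ^ n :=
  Nat.xor_lt_two_pow ha (Nat.pow_lt_pow_right one_lt_two he)

lemma flip_dark (k j m : ℕ) (hk : 3 ≤ k) (hj : j < k) (hm : m < 2 ^ (k - 1)) :
    dark (ell (m ^^^ 2 ^ (if j = 0 then 0 else j - 1)) j) j ↔ ¬ dark (ell m j) j := by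
  rw [dark_ell_iff, dark_ell_iff]
  rcases Nat.eq_zero_or_pos j with h0 | h0
  · subst h0
    simp only [if_pos rfl, Nat.testBit_xor, Nat.testBit_two_pow, pow_zero]
    rcases Bool.eq_false_or_eq_true (m.testBit 0) with h | h <;> simp [h]
  · have hj0 : j ≠ 0 := by omega
    simp only [if_neg hj0, Nat.testBit_xor, Nat.testBit_two_pow]
    have h1 : ¬ (j - 1 = j) := by omega
    have h2 : (j - 1 = j - 1) := rfl
    simp only [h1, h2, decide_true, decide_false, Bool.xor_false, Bool.xor_true]
    rcases Bool.eq_false_or_eq_true (m.testBit j) with h | h <;>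
      rcases Bool.eq_false_or_eq_true (m.testBit (j-1)) with h' | h' <;> simp [h, h']

lemma dark_count (k j : ℕ) (hk : 3 ≤ k) (hj : j < k) :
    ((Finset.range (2 ^ (k - 1))).filter (fun m => dark (ell m j) j)).card = 2 ^ (k - 2) := by
  set e : ℕ := if j = 0 then 0 else j - 1 with he
  have hek : e < k - 1 := by
    rw [he]; split <;> omega
  have hmem : ∀ m, m < 2 ^ (k - 1) → m ^^^ 2 ^ e < 2 ^ (k - 1) :=
    fun m hm => xor_pow_lt hm hek
  have hinv : ∀ m : ℕ, (m ^^^ 2 ^ e) ^^^ 2 ^ e = m := by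
    intro m; rw [Nat.xor_assoc, Nat.xor_self, Nat.xor_zero]
  have hcards : ((Finset.range (2 ^ (k - 1))).filter (fun m => dark (ell m j) j)).card
      = ((Finset.range (2 ^ (k - 1))).filter (fun m => ¬ dark (ell m j) j)).card := by
    refine Finset.card_bij' (fun m _ => m ^^^ 2 ^ e) (fun m _ => m ^^^ 2 ^ e) ?_ ?_ ?_ ?_
    · intro m hm
      simp only [Finset.mem_filter, Finset.mem_range] at hm ⊢
      refine ⟨hmem m hm.1, ?_⟩
      rw [flip_dark k j m hk hj hm.1]
      simp [hm.2]
    · intro m hm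
      simp only [Finset.mem_filter, Finset.mem_range] at hm ⊢
      refine ⟨hmem m hm.1, ?_⟩
      have := (flip_dark k j m hk hj hm.1).mpr hm.2
      exact this
    · intro m _; exact hinv m
    · intro m _; exact hinv m
  have htot := Finset.card_filter_add_card_filter_not
    (s := Finset.range (2 ^ (k - 1))) (fun m => dark (ell m j) j)
  rw [Finset.card_range] at htot
  have hpow : 2 ^ (k - 1) = 2 * 2 ^ (k - 2) := by
    rw [← pow_succ']
    congr 1
    omega
  omega

/-- Expected update measure: the total update count over all information elements is
`k · 2^(k-2) · (⌊k/2⌋ + 4)`, i.e. the average is `⌊k/2⌋/2 + 2`. -/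

lemma ell_lt (k m j : ℕ) (hm : m < 2 ^ (k - 1)) (hj : j < k) : ell m j < 2 ^ (k - 1) := by
  unfold ell
  apply Nat.xor_lt_two_pow hm
  have h1 : (2:ℕ) ^ j ≤ 2 ^ (k - 1) := Nat.pow_le_pow_right (by norm_num) (by omega)
  have h2 : (1:ℕ) ≤ 2 ^ j := Nat.one_le_two_pow
  omega

lemma Bline_subset (k m : ℕ) (hm : m < 2 ^ (k - 1)) :
    Bline k m ⊆ Finset.range (2 ^ (k - 1)) ×ˢ Finset.range k := by
  intro p hp
  unfold Bline at hp
  simp only [Finset.mem_biUnion, Finset.mem_range] at hp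
  obtain ⟨j, hjk, hp⟩ := hp
  simp only [Finset.mem_product, Finset.mem_range]
  exact ⟨Bset_fst k (ell m j) j p hp ▸ ell_lt k m j hm hjk,
    Bset_snd k (ell m j) j p hp hjk⟩

lemma ncount (k j : ℕ) (hk : 3 ≤ k) (hj : j < k) :
    ((Finset.range (2 ^ (k - 1))).filter (fun m => ¬ dark (ell m j) j)).card = 2 ^ (k - 2) := by
  have htot := Finset.card_filter_add_card_filter_not
    (s := Finset.range (2 ^ (k - 1))) (fun m => dark (ell m j) j)
  rw [Finset.card_range, dark_count k j hk hj] at htot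
  have hpow : 2 ^ (k - 1) = 2 * 2 ^ (k - 2) := by
    rw [← pow_succ']; congr 1; omega
  omega

theorem expected_update_measure (k : ℕ) (hk : 3 ≤ k) (hodd : Odd k) :
    ∑ i ∈ Finset.range (2 ^ (k - 1)), ∑ j ∈ Finset.range k, ucount k i j
      = k * 2 ^ (k - 2) * (k / 2 + 4) := by
  have hk0 : 0 < k := by omega
  set N : ℕ := 2 ^ (k - 1) with hNdef
  -- split ucount
  have h1 : ∑ i ∈ Finset.range N, ∑ j ∈ Finset.range k, ucount k i j
      = N * k + ∑ i ∈ Finset.range N, ∑ j ∈ Finset.range k,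
          ((Finset.range N).filter (fun m => (i, j) ∈ Bline k m)).card := by
    simp [ucount, Finset.sum_add_distrib, mul_comm]
    rfl
  rw [h1]
  -- for each m, the number of (i,j) in its line
  have key : ∀ m ∈ Finset.range N, (Bline k m).card
      = ∑ i ∈ Finset.range N, ∑ j ∈ Finset.range k,
          (if (i, j) ∈ Bline k m then 1 else 0) := by
    intro m hm
    rw [← Finset.sum_product']
    have : ∀ p : ℕ × ℕ, (if (p.1, p.2) ∈ Bline k m then (1:ℕ) else 0)
        = if p ∈ Bline k m then 1 else 0 := by intro p; rw [Prod.mk.eta]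
    simp only [this]
    rw [← Finset.card_filter, Finset.filter_mem_eq_inter,
      Finset.inter_eq_right.mpr (Bline_subset k m (Finset.mem_range.mp hm))]
  -- double counting
  have h2 : ∑ i ∈ Finset.range N, ∑ j ∈ Finset.range k,
      ((Finset.range N).filter (fun m => (i, j) ∈ Bline k m)).card
      = ∑ m ∈ Finset.range N, (Bline k m).card := by
    simp only [Finset.card_filter]
    rw [Finset.sum_congr rfl (fun i _ => Finset.sum_comm), Finset.sum_comm]
    exact (Finset.sum_congr rfl key).symm
  rw [h2]
  -- counting each line
  have h3 : ∑ m ∈ Finset.range N, (Bline k m).card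
      = k * (2 ^ (k - 2) * (k / 2 + 1) + 2 ^ (k - 2)) := by
    have step1 : ∀ m ∈ Finset.range N, (Bline k m).card
        = ∑ j ∈ Finset.range k, (if dark (ell m j) j then k / 2 + 1 else 1) := by
      intro m _
      rw [Bline_card k m hk0]
      exact Finset.sum_congr rfl (fun j _ => Bset_card k (ell m j) j hk0)
    rw [Finset.sum_congr rfl step1, Finset.sum_comm]
    have step2 : ∀ j ∈ Finset.range k,
        (∑ m ∈ Finset.range N, if dark (ell m j) j then k / 2 + 1 else 1)
        = 2 ^ (k - 2) * (k / 2 + 1) + 2 ^ (k - 2) := by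
      intro j hj
      rw [Finset.sum_ite (fun _ => k / 2 + 1) (fun _ => 1), Finset.sum_const,
        Finset.sum_const, dark_count k j hk (Finset.mem_range.mp hj),
        ncount k j hk (Finset.mem_range.mp hj), smul_eq_mul, smul_eq_mul, mul_one]
    rw [Finset.sum_congr rfl step2, Finset.sum_const, Finset.card_range, smul_eq_mul]
  rw [h3]
  have hpow : N = 2 * 2 ^ (k - 2) := by
    rw [hNdef, ← pow_succ']; congr 1; omega
  rw [hpow]; ring
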